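/- Define A_j² = (2/d) / (1 + sin²(σ_j)/ζ_j - sin(2σ_j)/(2σ_j)) where ζ_j = √((n₁kdθ)² - σ_j²)·(chosen positive), in the Pekeris setting with σ_j solving the modal equation. Then for any α ∈ (1/2, 1), sup over 1 ≤ j ≤ N - ⌊N^α⌋ of |A_j² - 2/d| = O(N^{α-1}) as N → ∞. -/

import Mathlib

open Real

set_option maxHeartbeats 1000000 in
/-- Normalization constants of the Pekeris propagating modes:
`A_j² = (2/d)/(1 + sin²σ_j/ζ_j - sin(2σ_j)/(2σ_j))` with `ζ_j = √(c² - σ_j²)` satisfies,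
for any `α ∈ (1/2,1)`, `sup_{1 ≤ j ≤ N-⌊N^α⌋} |A_j² - 2/d| = O(N^{α-1})` as `N → ∞`. -/
theorem stmt_4 (d : ℝ) (hd : 0 < d) (c : ℕ → ℝ) (σ : ℕ → ℕ → ℝ)
    (hc : ∀ N : ℕ, c N / π - 1 < (N : ℝ) ∧ (N : ℝ) ≤ c N / π)
    (hσmem : ∀ N : ℕ, ∀ j : ℕ, 1 ≤ j → j ≤ N →
      π / 2 + ((j : ℝ) - 1) * π < σ N j ∧ σ N j < π / 2 + (j : ℝ) * π ∧
        0 < σ N j ∧ σ N j < c N)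
    (hσeq : ∀ N : ℕ, ∀ j : ℕ, 1 ≤ j → j ≤ N →
      Real.tan (σ N j) = - σ N j / Real.sqrt ((c N) ^ 2 - (σ N j) ^ 2))
    (α : ℝ) (hα0 : 1 / 2 < α) (hα1 : α < 1) :
    ∃ C : ℝ, ∃ N₀ : ℕ, ∀ N : ℕ, N₀ ≤ N → ∀ j : ℕ,
      1 ≤ j → j ≤ N - ⌊(N : ℝ) ^ α⌋₊ →
      |(2 / d) / (1 + Real.sin (σ N j) ^ 2 / Real.sqrt ((c N) ^ 2 - (σ N j) ^ 2)
          - Real.sin (2 * σ N j) / (2 * σ N j)) - 2 / d|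
        ≤ C * (N : ℝ) ^ (α - 1) := by
  refine ⟨2 / d, 4, ?_⟩
  intro N hN j hj1 hj2
  set m := ⌊(N : ℝ) ^ α⌋₊ with hm
  have hjm : j + m ≤ N := by omega
  have hjN : j ≤ N := by omega
  obtain ⟨hlo, hhi, hs0, hsc⟩ := hσmem N j hj1 hjN
  have heq := hσeq N j hj1 hjN
  set s := σ N j with hs
  have hc0 : 0 < c N := hs0.trans hsc
  have hcs : 0 < (c N) ^ 2 - s ^ 2 := by nlinarith
  set ζ := Real.sqrt ((c N) ^ 2 - s ^ 2) with hζ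
  have hζ0 : 0 < ζ := Real.sqrt_pos.mpr hcs
  -- cos s ≠ 0
  have hcos : Real.cos s ≠ 0 := by
    intro h
    have ht : Real.tan s = 0 := by rw [Real.tan_eq_sin_div_cos, h, div_zero]
    rw [heq] at ht
    have : -s = 0 := by
      rcases div_eq_zero_iff.mp ht with h' | h'
      · exact h'
      · exact absurd h' hζ0.ne'
    linarith
  -- sin(2s)/(2s) = -cos²s/ζ
  have hsin2 : Real.sin (2 * s) / (2 * s) = -(Real.cos s) ^ 2 / ζ := by
    have htm : Real.sin s = Real.tan s * Real.cos s := (Real.tan_mul_cos hcos).symm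
    rw [Real.sin_two_mul, htm, heq]
    field_simp
  -- denominator simplifies
  have hD : 1 + Real.sin s ^ 2 / ζ - Real.sin (2 * s) / (2 * s) = 1 + 1 / ζ := by
    rw [hsin2]
    have hpy := Real.sin_sq_add_cos_sq s
    field_simp
    linarith
  rw [hD]
  -- value equals -(2/d)/(ζ+1)
  have hval : (2 / d) / (1 + 1 / ζ) - 2 / d = -((2 / d) / (ζ + 1)) := by
    field_simp
    ring
  rw [hval, abs_neg, abs_of_nonneg (by positivity)]
  -- lower bound on ζ
  have hN1 : (1 : ℝ) ≤ (N : ℝ) := by exact_mod_cast (by omega : 1 ≤ N)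
  have hNa2 : (2 : ℝ) ≤ (N : ℝ) ^ α := by
    have h1 : (N : ℝ) ^ ((1:ℝ)/2) ≤ (N : ℝ) ^ α :=
      Real.rpow_le_rpow_of_exponent_le hN1 hα0.le
    have h4 : (4 : ℝ) ≤ (N : ℝ) := by exact_mod_cast hN
    have h42 : ((4:ℝ)) ^ ((1:ℝ)/2) = 2 := by
      rw [show (4:ℝ) = 2 ^ (2:ℕ) by norm_num, ← Real.rpow_natCast 2 2,
        ← Real.rpow_mul (by norm_num)]
      norm_num
    have h2 : ((4:ℝ)) ^ ((1:ℝ)/2) ≤ (N : ℝ) ^ ((1:ℝ)/2) :=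
      Real.rpow_le_rpow (by norm_num) h4 (by norm_num)
    linarith
  have hmlb : (N : ℝ) ^ α - 1 < (m : ℝ) := by
    have := Nat.lt_floor_add_one ((N : ℝ) ^ α)
    push_cast at this ⊢
    linarith
  have hcN : (N : ℝ) * π ≤ c N := by
    have hπ : (0:ℝ) < π := Real.pi_pos
    have := (hc N).2
    rw [le_div_iff₀ hπ] at this
    exact this
  have hjle : (j : ℝ) ≤ (N : ℝ) - (m : ℝ) := by
    have : (j : ℝ) + (m : ℝ) ≤ (N : ℝ) := by exact_mod_cast hjm
    linarith
  have hpow : ((N : ℝ) ^ ((1:ℝ) - α)) ^ 2 ≤ (N : ℝ) * (N : ℝ) ^ α := by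
    have h1 : ((N : ℝ) ^ ((1:ℝ) - α)) ^ 2 = (N : ℝ) ^ ((2:ℝ) - 2 * α) := by
      rw [← Real.rpow_natCast ((N : ℝ) ^ ((1:ℝ) - α)) 2, ← Real.rpow_mul (by positivity)]
      norm_num
      ring_nf
    have h2 : (N : ℝ) * (N : ℝ) ^ α = (N : ℝ) ^ ((1:ℝ) + α) := by
      rw [Real.rpow_add (by linarith : (0:ℝ) < (N:ℝ)), Real.rpow_one]
    rw [h1, h2]
    exact Real.rpow_le_rpow_of_exponent_le hN1 (by linarith)
  have hπpos := Real.pi_pos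
  have hπ : (3.14 : ℝ) < π := by
    have := Real.pi_gt_d6; linarith
  have hjπ : (j : ℝ) * π ≤ ((N : ℝ) - (m : ℝ)) * π :=
    mul_le_mul_of_nonneg_right hjle hπpos.le
  have h1 : ((m : ℝ) - 1/2) * π < c N - s := by nlinarith
  have h2 : (N : ℝ) ^ α / 4 * π ≤ ((m : ℝ) - 1/2) * π := by
    apply mul_le_mul_of_nonneg_right _ hπpos.le
    linarith
  have h21 : (N : ℝ) ^ α / 4 * π ≤ c N - s := by linarith
  have h3 : (N : ℝ) * π ≤ c N + s := by linarith
  have h4 : ((N : ℝ) ^ α / 4 * π) * ((N : ℝ) * π) ≤ (c N - s) * (c N + s) := by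
    have hnn1 : (0:ℝ) ≤ (N : ℝ) * π := mul_nonneg (Nat.cast_nonneg N) hπpos.le
    have hnn2 : (0:ℝ) ≤ c N - s := by linarith
    exact mul_le_mul h21 h3 hnn1 hnn2
  have hπ2 : (4 : ℝ) ≤ π * π := by nlinarith
  have hNP : (0 : ℝ) ≤ (N : ℝ) * (N : ℝ) ^ α := by positivity
  have hζlb : (N : ℝ) ^ ((1:ℝ) - α) ≤ ζ := by
    rw [hζ]
    rw [show ((N : ℝ) ^ ((1:ℝ) - α)) = Real.sqrt (((N : ℝ) ^ ((1:ℝ) - α)) ^ 2) by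
      rw [Real.sqrt_sq (by positivity)]]
    apply Real.sqrt_le_sqrt
    nlinarith [h4, hpow, hπ2, hNP]
  have hζpos' : (0:ℝ) < (N : ℝ) ^ ((1:ℝ) - α) := by positivity
  have hinv : (N : ℝ) ^ (α - 1) = ((N : ℝ) ^ ((1:ℝ) - α))⁻¹ := by
    rw [← Real.rpow_neg (by positivity : (0:ℝ) ≤ (N:ℝ))]
    congr 1
    ring
  have hii : (ζ + 1)⁻¹ ≤ ((N : ℝ) ^ ((1:ℝ) - α))⁻¹ := by
    apply inv_anti₀ hζpos'
    linarith
  calc (2 / d) / (ζ + 1) = 2 / d * (ζ + 1)⁻¹ := by rw [div_eq_mul_inv]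
    _ ≤ 2 / d * ((N : ℝ) ^ ((1:ℝ) - α))⁻¹ := by
        apply mul_le_mul_of_nonneg_left hii (by positivity)
    _ = 2 / d * (N : ℝ) ^ (α - 1) := by rw [hinv]
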